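/- arXiv:1706.09477 — 2 statements merged into one kernel-verified Lean document; each statement's English description precedes it below -/
import Mathlib

section
/- Let Ω = (a, b) ⊂ ℝ be an open interval with |Ω| = b − a > 0. Then lim_{t→0+} (1/t)·(|Ω| − H_Ω(t) − (2/π)·t·ln(1/t)) = (2/π)·(1 + ln(|Ω|)). -/
open MeasureTheory Real Filter Topology

noncomputable section

namespace PoissonHC

/-- `κ_d = Γ((d+1)/2) / π^((d+1)/2)`. -/
def kappa (d : ℕ) : ℝ := Real.Gamma (((d : ℝ) + 1) / 2) / Real.pi ^ (((d : ℝ) + 1) / 2)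

/-- `w_k`, the volume of the unit ball in `ℝ^k`. -/
def wVol (k : ℕ) : ℝ := Real.pi ^ ((k : ℝ) / 2) / Real.Gamma (1 + (k : ℝ) / 2)

/-- `A_k = k ⬝ w_k`, the surface area of the unit ball in `ℝ^k`. -/
def aSurf (k : ℕ) : ℝ := k * wVol k

/-- The Poisson kernel `p_t(x) = κ_d t / (t² + |x|²)^((d+1)/2)`. -/
def poissonKernel (d : ℕ) (t : ℝ) (x : EuclideanSpace ℝ (Fin d)) : ℝ :=
  kappa d * t / (t ^ 2 + ‖x‖ ^ 2) ^ (((d : ℝ) + 1) / 2)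

/-- The heat content `H_Ω(t) = ∫_Ω ∫_Ω p_t(x−y) dy dx`. -/
def heatContent (d : ℕ) (Ω : Set (EuclideanSpace ℝ (Fin d))) (t : ℝ) : ℝ :=
  ∫ x in Ω, ∫ y in Ω, poissonKernel d t (x - y)

/-- The set covariance function `g_Ω(y) = |Ω ∩ (Ω + y)|`. -/
def cov (d : ℕ) (Ω : Set (EuclideanSpace ℝ (Fin d))) (y : EuclideanSpace ℝ (Fin d)) : ℝ :=
  (volume (Ω ∩ {x | x - y ∈ Ω})).toReal

/-- `ℓ_Ω = inf {ℓ > 0 : g_Ω(y) = 0 for all |y| ≥ ℓ}`. -/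
def ellOmega (d : ℕ) (Ω : Set (EuclideanSpace ℝ (Fin d))) : ℝ :=
  sInf {ℓ : ℝ | 0 < ℓ ∧ ∀ y : EuclideanSpace ℝ (Fin d), ℓ ≤ ‖y‖ → cov d Ω y = 0}

/-- The divergence of a vector field on `ℝ^d`. -/
def divergence (d : ℕ) (φ : EuclideanSpace ℝ (Fin d) → EuclideanSpace ℝ (Fin d))
    (x : EuclideanSpace ℝ (Fin d)) : ℝ :=
  ∑ i, fderiv ℝ φ x (EuclideanSpace.single i 1) i

/-- The set `{∫_Ω div φ : φ ∈ C¹_c(ℝ^d, ℝ^d), ‖φ‖_∞ ≤ 1}` whose supremum is the perimeter. -/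
def perimVals (d : ℕ) (Ω : Set (EuclideanSpace ℝ (Fin d))) : Set ℝ :=
  {r | ∃ φ : EuclideanSpace ℝ (Fin d) → EuclideanSpace ℝ (Fin d),
    ContDiff ℝ 1 φ ∧ HasCompactSupport φ ∧ (∀ x, ‖φ x‖ ≤ 1) ∧
    r = ∫ x in Ω, divergence d φ x}

/-- The perimeter `Per(Ω)`. -/
def perimeter (d : ℕ) (Ω : Set (EuclideanSpace ℝ (Fin d))) : ℝ := sSup (perimVals d Ω)

/-- The set `{∫_Ω ⟨∇φ, u⟩ : φ ∈ C¹_c(ℝ^d, ℝ), ‖φ‖_∞ ≤ 1}` whose supremum is the directional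
variation `V_u(Ω)`. -/
def dirVarVals (d : ℕ) (Ω : Set (EuclideanSpace ℝ (Fin d)))
    (u : EuclideanSpace ℝ (Fin d)) : Set ℝ :=
  {r | ∃ φ : EuclideanSpace ℝ (Fin d) → ℝ,
    ContDiff ℝ 1 φ ∧ HasCompactSupport φ ∧ (∀ x, |φ x| ≤ 1) ∧
    r = ∫ x in Ω, fderiv ℝ φ x u}

/-- The directional variation `V_u(Ω)`. -/
def dirVar (d : ℕ) (Ω : Set (EuclideanSpace ℝ (Fin d)))
    (u : EuclideanSpace ℝ (Fin d)) : ℝ := sSup (dirVarVals d Ω u)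

/-- `γ_Ω(s) = ∫_{S^{d−1}} (V_u(Ω)/2 − (g_Ω(0) − g_Ω(su))/s) dH^{d−1}(u)`. -/
def gammaFn (d : ℕ) (Ω : Set (EuclideanSpace ℝ (Fin d))) (s : ℝ) : ℝ :=
  ∫ u in Metric.sphere (0 : EuclideanSpace ℝ (Fin d)) 1,
    (dirVar d Ω u / 2 - (cov d Ω 0 - cov d Ω (s • u)) / s) ∂μH[(d : ℝ) - 1]

/-- The closed unit ball centered at the origin in `ℝ^d`. -/
def unitBall (d : ℕ) : Set (EuclideanSpace ℝ (Fin d)) := Metric.closedBall 0 1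

/-- `Θ(z) = ∫₀^{arcsin z} sin^{d−2} θ cos² θ dθ`. -/
def thetaFn (d : ℕ) (z : ℝ) : ℝ :=
  ∫ θ in (0:ℝ)..(Real.arcsin z), Real.sin θ ^ (d - 2) * Real.cos θ ^ 2

/-- The square `Q = [−1,1] × [−1,1] ⊂ ℝ²`. -/
def Qsq : Set (EuclideanSpace ℝ (Fin 2)) :=
  {x | x 0 ∈ Set.Icc (-1 : ℝ) 1 ∧ x 1 ∈ Set.Icc (-1 : ℝ) 1}

/-- `φ_Ω(t) = ∫_{|tw| ≥ ℓ_Ω} p_1(w) dw`. -/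
def phiOmega (d : ℕ) (Ω : Set (EuclideanSpace ℝ (Fin d))) (t : ℝ) : ℝ :=
  ∫ w in {w : EuclideanSpace ℝ (Fin d) | ellOmega d Ω ≤ ‖t • w‖}, poissonKernel d 1 w

/-- `Ψ(t) = ∫₀^{ℓ/t} r^d/(1 + r²)^((d+1)/2) dr`. -/
def PsiGen (d : ℕ) (ℓ t : ℝ) : ℝ :=
  ∫ r in (0:ℝ)..(ℓ / t), r ^ d / (1 + r ^ 2) ^ (((d : ℝ) + 1) / 2)

/-- `F(t) = ln(ℓ + √(ℓ² + t²)) + ∫₀^{arcsinh(ℓ/t)} (tanh^d θ − 1) dθ`. -/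
def FGen (d : ℕ) (ℓ t : ℝ) : ℝ :=
  Real.log (ℓ + Real.sqrt (ℓ ^ 2 + t ^ 2)) +
    ∫ θ in (0:ℝ)..(Real.arsinh (ℓ / t)), (Real.tanh θ ^ d - 1)

/-- The last coordinate vector `e_d = (0, …, 0, 1)` in `ℝ^d` (defined as `0` when `d = 0`). -/
def eLast (d : ℕ) : EuclideanSpace ℝ (Fin d) :=
  if h : 0 < d then EuclideanSpace.single (⟨d - 1, by omega⟩ : Fin d) 1 else 0

/-- `R_Ω(t) = ∫₀^{ℓ_Ω/t} r^d p_1(r e_d) γ_Ω(tr) dr`. -/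
def RFn (d : ℕ) (Ω : Set (EuclideanSpace ℝ (Fin d))) (t : ℝ) : ℝ :=
  ∫ r in (0:ℝ)..(ellOmega d Ω / t), r ^ d * poissonKernel d 1 (r • eLast d) * gammaFn d Ω (t * r)

end PoissonHC

open PoissonHC

noncomputable def Aux (u : ℝ) : ℝ := u * arctan u - (1/2) * Real.log (1 + u ^ 2)


lemma inner_int (t : ℝ) (ht : 0 < t) (a b x : ℝ) (hab : a ≤ b) :
    ∫ y in Set.Ioo a b, t / (Real.pi * (t ^ 2 + (x - y) ^ 2)) =
      (1 / Real.pi) * (arctan ((b - x) / t) - arctan ((a - x) / t)) := by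
  have hπ := Real.pi_pos
  have ht' : t ≠ 0 := ne_of_gt ht
  rw [← MeasureTheory.integral_Ioc_eq_integral_Ioo, ← intervalIntegral.integral_of_le hab]
  have key : ∀ y ∈ Set.uIcc a b,
      HasDerivAt (fun y => (1 / Real.pi) * arctan ((y - x) / t))
        (t / (Real.pi * (t ^ 2 + (x - y) ^ 2))) y := by
    intro y _
    have h1 : HasDerivAt (fun y : ℝ => (y - x) / t) (1 / t) y := by
      simpa using ((hasDerivAt_id y).sub_const x).div_const t
    have h2 := (Real.hasDerivAt_arctan ((y - x) / t)).comp y h1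
    have h3 := h2.const_mul (1 / Real.pi)
    refine h3.congr_deriv ?_
    have hpos : (0:ℝ) < t ^ 2 + (x - y) ^ 2 := by positivity
    have h4 : (x - y) ^ 2 = (y - x) ^ 2 := by ring
    field_simp
    ring
  rw [intervalIntegral.integral_eq_sub_of_hasDerivAt key]
  · ring
  · apply Continuous.intervalIntegrable
    apply continuous_const.div
    · continuity
    · intro y
      have : (0:ℝ) < t ^ 2 + (x - y) ^ 2 := by positivity
      positivity



lemma Aux_deriv (u : ℝ) : HasDerivAt Aux (arctan u) u := by
  have hpos : (0:ℝ) < 1 + u ^ 2 := by positivity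
  have h1 : HasDerivAt (fun u : ℝ => u * arctan u)
      (1 * arctan u + u * (1 / (1 + u ^ 2))) u :=
    (hasDerivAt_id u).mul (Real.hasDerivAt_arctan u)
  have h2 : HasDerivAt (fun u : ℝ => 1 + u ^ 2) (2 * u) u := by
    simpa using (hasDerivAt_pow 2 u).const_add 1
  have h3 : HasDerivAt (fun u : ℝ => Real.log (1 + u ^ 2)) ((1 + u ^ 2)⁻¹ * (2 * u)) u :=
    (Real.hasDerivAt_log (ne_of_gt hpos)).comp (h₂ := Real.log) u h2
  have h4 := h1.sub (h3.const_mul (1/2))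
  refine h4.congr_deriv ?_
  field_simp
  ring

lemma Aux_even (u : ℝ) : Aux (-u) = Aux u := by
  simp [Aux, Real.arctan_neg]

lemma Aux_zero : Aux 0 = 0 := by simp [Aux]

lemma outer_int (t : ℝ) (ht : 0 < t) (a b : ℝ) (hab : a ≤ b) :
    ∫ x in Set.Ioo a b, (1 / Real.pi) * (arctan ((b - x) / t) - arctan ((a - x) / t)) =
      (2 * t / Real.pi) * Aux ((b - a) / t) := by
  have hπ := Real.pi_pos
  have ht' : t ≠ 0 := ne_of_gt ht
  rw [← MeasureTheory.integral_Ioc_eq_integral_Ioo, ← intervalIntegral.integral_of_le hab]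
  have key : ∀ x ∈ Set.uIcc a b,
      HasDerivAt (fun x => (1 / Real.pi) * (-(t * Aux ((b - x) / t)) + t * Aux ((a - x) / t)))
        ((1 / Real.pi) * (arctan ((b - x) / t) - arctan ((a - x) / t))) x := by
    intro x _
    have hb : HasDerivAt (fun x : ℝ => (b - x) / t) (-1 / t) x := by
      simpa using ((hasDerivAt_id x).const_sub b).div_const t
    have ha : HasDerivAt (fun x : ℝ => (a - x) / t) (-1 / t) x := by
      simpa using ((hasDerivAt_id x).const_sub a).div_const t
    have h1 := ((Aux_deriv ((b - x) / t)).comp x hb).const_mul t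
    have h2 := ((Aux_deriv ((a - x) / t)).comp x ha).const_mul t
    have h3 := ((h1.neg).add h2).const_mul (1 / Real.pi)
    refine h3.congr_deriv ?_
    field_simp
    ring
  rw [intervalIntegral.integral_eq_sub_of_hasDerivAt key]
  · have e1 : (b - b) / t = 0 := by simp
    have e2 : (a - b) / t = -((b - a) / t) := by ring
    have e3 : (a - a) / t = 0 := by simp
    have e4 : (b - a) / t = (b - a) / t := rfl
    rw [e1, e2, e3, Aux_zero, Aux_even]
    ring
  · apply Continuous.intervalIntegrable
    continuity


-- limit of arctan(t/L)/t as t→0+ is 1/L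
lemma lim1 (L : ℝ) (hL : 0 < L) :
    Tendsto (fun t : ℝ => arctan (t / L) / t) (𝓝[>] 0) (𝓝 (1 / L)) := by
  have hd : HasDerivAt (fun t : ℝ => arctan (t / L)) (1 / L) 0 := by
    have h1 : HasDerivAt (fun t : ℝ => t / L) (1 / L) 0 := by
      simpa using (hasDerivAt_id (0:ℝ)).div_const L
    have := (Real.hasDerivAt_arctan ((0:ℝ) / L)).comp 0 h1
    simpa [Function.comp_def] using this
  have h2 := hasDerivAt_iff_tendsto_slope.mp hd
  have h3 : Tendsto (slope (fun t : ℝ => arctan (t / L)) 0) (𝓝[>] 0) (𝓝 (1 / L)) :=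
    h2.mono_left (nhdsWithin_mono 0 (fun x hx => ne_of_gt hx))
  refine h3.congr fun t => ?_
  simp [slope_def_field]

lemma lim2 (L : ℝ) (hL : 0 < L) :
    Tendsto (fun t : ℝ => Real.log (t ^ 2 + L ^ 2)) (𝓝[>] 0) (𝓝 (2 * Real.log L)) := by
  have hcont : ContinuousAt (fun t : ℝ => Real.log (t ^ 2 + L ^ 2)) 0 := by
    have h1 : ContinuousAt (fun t : ℝ => t ^ 2 + L ^ 2) 0 := by fun_prop
    exact ContinuousAt.comp (Real.continuousAt_log (by positivity)) h1
  have := hcont.tendsto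
  have hlog : Real.log ((0:ℝ) ^ 2 + L ^ 2) = 2 * Real.log L := by
    norm_num [Real.log_pow]
  rw [hlog] at this
  exact this.mono_left nhdsWithin_le_nhds


/-- the one-dimensional result for an open interval `Ω = (a, b)`. -/
theorem interval_heatContent_limit (a b : ℝ) (hab : a < b) :
    Tendsto (fun t : ℝ =>
        (1 / t) * ((b - a) -
          (∫ x in Set.Ioo a b, ∫ y in Set.Ioo a b, t / (Real.pi * (t ^ 2 + (x - y) ^ 2))) -
          (2 / Real.pi) * (t * Real.log (1 / t))))
      (𝓝[>] 0) (𝓝 ((2 / Real.pi) * (1 + Real.log (b - a)))) := by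
  set L := b - a with hLdef
  have hL : 0 < L := by simp [hLdef]; linarith
  have hπ := Real.pi_pos
  have hπ' : Real.pi ≠ 0 := ne_of_gt hπ
  have hL' : L ≠ 0 := ne_of_gt hL
  -- the target limit value rewritten
  have hval : (2 / Real.pi) * (1 + Real.log L) =
      (2 * L / Real.pi) * (1 / L) + (1 / Real.pi) * (2 * Real.log L) := by
    field_simp
  rw [hval]
  -- the limit of the nice form
  have hlim : Tendsto (fun t : ℝ =>
      (2 * L / Real.pi) * (arctan (t / L) / t) + (1 / Real.pi) * Real.log (t ^ 2 + L ^ 2))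
      (𝓝[>] 0) (𝓝 ((2 * L / Real.pi) * (1 / L) + (1 / Real.pi) * (2 * Real.log L))) :=
    ((lim1 L hL).const_mul _).add ((lim2 L hL).const_mul _)
  refine hlim.congr' ?_
  filter_upwards [self_mem_nhdsWithin] with t ht
  have ht : (0:ℝ) < t := ht
  have ht' : t ≠ 0 := ne_of_gt ht
  -- evaluate the double integral
  have hin : ∀ x : ℝ, ∫ y in Set.Ioo a b, t / (Real.pi * (t ^ 2 + (x - y) ^ 2)) =
      (1 / Real.pi) * (arctan ((b - x) / t) - arctan ((a - x) / t)) :=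
    fun x => inner_int t ht a b x hab.le
  have hH : (∫ x in Set.Ioo a b, ∫ y in Set.Ioo a b, t / (Real.pi * (t ^ 2 + (x - y) ^ 2))) =
      (2 * t / Real.pi) * Aux (L / t) := by
    simp only [hin]
    exact outer_int t ht a b hab.le
  rw [hH]
  -- algebraic identity
  have harct : arctan (L / t) = Real.pi / 2 - arctan (t / L) := by
    rw [show L / t = (t / L)⁻¹ by rw [inv_div]]
    exact Real.arctan_inv_of_pos (by positivity)
  have hlog1 : Real.log (1 + (L / t) ^ 2) = Real.log (t ^ 2 + L ^ 2) - 2 * Real.log t := by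
    have h1 : 1 + (L / t) ^ 2 = (t ^ 2 + L ^ 2) / t ^ 2 := by field_simp
    rw [h1, Real.log_div (by positivity) (by positivity), Real.log_pow]
    push_cast; ring
  have hlog2 : Real.log (1 / t) = -Real.log t := by
    rw [one_div, Real.log_inv]
  rw [Aux, harct, hlog1, hlog2]
  field_simp
  ring
end
end

section
/- Let d ≥ 2 be an integer, let B = B₁(0) be the closed unit ball in ℝ^d, let 0 ≤ s ≤ 1, and let B(2s) = B₁(2s e_d) be the unit ball centered at 2s e_d with e_d = (0, …, 0, 1). Then |B ∩ B(2s)| = 2 A_{d−1} Θ(√(1 − s²)) − 2s w_{d−1} (1 − s²)^{(d−1)/2}, where Θ(z) = ∫₀^{arcsin(z)} sin^{d−2}(θ) cos²(θ) dθ for 0 ≤ z ≤ 1. In particular, Θ(1) = w_d/(2 A_{d−1}). -/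
open MeasureTheory Real Filter Topology

noncomputable section

open PoissonHC

section AuxVolInter

open MeasureTheory Real Set PoissonHC

private lemma slice_vol' (s Q : ℝ) (hs0 : 0 ≤ s) :
    volume {t : ℝ | t ^ 2 + Q ≤ 1 ∧ (t - 2 * s) ^ 2 + Q ≤ 1}
      = ENNReal.ofReal (2 * Real.sqrt (1 - Q) - 2 * s) := by
  by_cases h : Q ≤ 1
  · set c := Real.sqrt (1 - Q) with hc
    have hc0 : 0 ≤ c := Real.sqrt_nonneg _
    have hc2 : c ^ 2 = 1 - Q := Real.sq_sqrt (by linarith)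
    have : {t : ℝ | t ^ 2 + Q ≤ 1 ∧ (t - 2 * s) ^ 2 + Q ≤ 1} = Set.Icc (2 * s - c) c := by
      ext t
      simp only [Set.mem_setOf_eq, Set.mem_Icc]
      constructor
      · rintro ⟨h1, h2⟩
        constructor
        · nlinarith [sq_nonneg (t - 2 * s + c)]
        · nlinarith [sq_nonneg (t + c)]
      · rintro ⟨h1, h2⟩
        constructor
        · nlinarith
        · nlinarith
    rw [this, Real.volume_Icc]
    congr 1
    ring
  · have : {t : ℝ | t ^ 2 + Q ≤ 1 ∧ (t - 2 * s) ^ 2 + Q ≤ 1} = ∅ := by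
      ext t; simp only [Set.mem_setOf_eq, Set.mem_empty_iff_false, iff_false, not_and]
      intro h1; nlinarith [sq_nonneg (t - 2 * s)]
    rw [this, measure_empty, Real.sqrt_eq_zero'.mpr (by linarith)]
    symm
    rw [ENNReal.ofReal_eq_zero]
    linarith

private lemma oneD' (n : ℕ) (s : ℝ) (hs0 : 0 ≤ s) (hs1 : s ≤ 1) :
    (∫ r in Set.Ioi (0:ℝ), r ^ n * max (2 * Real.sqrt (1 - r ^ 2) - 2 * s) 0) =
      2 * (∫ θ in (0:ℝ)..(Real.arcsin (Real.sqrt (1 - s ^ 2))),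
            Real.sin θ ^ n * Real.cos θ ^ 2)
        - 2 * s * (Real.sqrt (1 - s ^ 2)) ^ (n + 1) / (n + 1) := by
  have hs2 : 0 ≤ 1 - s ^ 2 := by nlinarith
  set b := Real.sqrt (1 - s ^ 2) with hbdef
  have hb0 : 0 ≤ b := Real.sqrt_nonneg _
  have hb1 : b ≤ 1 := Real.sqrt_le_one.mpr (by nlinarith)
  have hb2 : b ^ 2 = 1 - s ^ 2 := Real.sq_sqrt hs2
  set g : ℝ → ℝ := fun r => r ^ n * max (2 * Real.sqrt (1 - r ^ 2) - 2 * s) 0 with hgdef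
  have hgcont : Continuous g := by
    apply (continuous_pow n).mul
    exact (((continuous_const.mul (Real.continuous_sqrt.comp
      (continuous_const.sub (continuous_pow 2)))).sub continuous_const)).max continuous_const
  have hzero : ∀ r ∈ Set.Ioi b, g r = 0 := by
    intro r hr
    have hr' : b < r := hr
    have h1 : 1 - r ^ 2 ≤ s ^ 2 := by nlinarith
    have h2 : Real.sqrt (1 - r ^ 2) ≤ s := by
      calc Real.sqrt (1 - r ^ 2) ≤ Real.sqrt (s ^ 2) := Real.sqrt_le_sqrt h1
        _ = s := Real.sqrt_sq hs0
    simp only [hgdef]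
    rw [max_eq_right (by linarith)]
    ring
  have hIoi : (∫ r in Set.Ioi (0:ℝ), g r) = ∫ r in Set.Ioc (0:ℝ) b, g r := by
    rw [← Set.Ioc_union_Ioi_eq_Ioi hb0]
    rw [MeasureTheory.setIntegral_union (Set.Ioc_disjoint_Ioi le_rfl) measurableSet_Ioi
      (hgcont.integrableOn_Ioc) (integrableOn_zero.congr_fun
        (fun r hr => (hzero r hr).symm) measurableSet_Ioi)]
    rw [MeasureTheory.setIntegral_congr_fun measurableSet_Ioi hzero]
    simp
  have hIcc : (∫ r in Set.Ioc (0:ℝ) b, g r) = ∫ r in (0:ℝ)..b,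
      r ^ n * (2 * Real.sqrt (1 - r ^ 2) - 2 * s) := by
    rw [intervalIntegral.integral_of_le hb0]
    apply MeasureTheory.setIntegral_congr_fun measurableSet_Ioc
    intro r hr
    have hr2 : r ^ 2 ≤ b ^ 2 := by nlinarith [hr.1.le, hr.2]
    have : s ≤ Real.sqrt (1 - r ^ 2) := by
      calc s = Real.sqrt (s ^ 2) := (Real.sqrt_sq hs0).symm
        _ ≤ Real.sqrt (1 - r ^ 2) := Real.sqrt_le_sqrt (by nlinarith)
    simp only [hgdef]
    rw [max_eq_left (by linarith)]
  have hα0 : 0 ≤ Real.arcsin b := Real.arcsin_nonneg.mpr hb0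
  have hα2 : Real.arcsin b ≤ π / 2 := Real.arcsin_le_pi_div_two b
  have hsub : (∫ r in (0:ℝ)..b, r ^ n * (2 * Real.sqrt (1 - r ^ 2) - 2 * s))
      = ∫ θ in (0:ℝ)..(Real.arcsin b),
          Real.cos θ • (fun r => r ^ n * (2 * Real.sqrt (1 - r ^ 2) - 2 * s)) (Real.sin θ) := by
    have h := intervalIntegral.integral_comp_smul_deriv (a := (0:ℝ)) (b := Real.arcsin b)
      (f := Real.sin) (f' := Real.cos)
      (g := fun r => r ^ n * (2 * Real.sqrt (1 - r ^ 2) - 2 * s))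
      (fun x _ => Real.hasDerivAt_sin x) Real.continuous_cos.continuousOn
      ((continuous_pow n).mul (((continuous_const.mul (Real.continuous_sqrt.comp
        (continuous_const.sub (continuous_pow 2)))).sub continuous_const)))
    rw [Real.sin_zero, Real.sin_arcsin (by linarith) hb1] at h
    rw [← h]
    simp [Function.comp]
  have hcongr : (∫ θ in (0:ℝ)..(Real.arcsin b),
        Real.cos θ • (fun r => r ^ n * (2 * Real.sqrt (1 - r ^ 2) - 2 * s)) (Real.sin θ))
      = ∫ θ in (0:ℝ)..(Real.arcsin b),
          (2 * (Real.sin θ ^ n * Real.cos θ ^ 2) - 2 * s * (Real.sin θ ^ n * Real.cos θ)) := by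
    apply intervalIntegral.integral_congr
    intro θ hθ
    rw [Set.uIcc_of_le hα0] at hθ
    have hcos : 0 ≤ Real.cos θ :=
      Real.cos_nonneg_of_mem_Icc ⟨by linarith [hθ.1, Real.pi_div_two_pos], by linarith [hθ.2]⟩
    have h1 : Real.sqrt (1 - Real.sin θ ^ 2) = Real.cos θ := by
      rw [← Real.cos_sq', Real.sqrt_sq hcos]
    simp only [smul_eq_mul, h1]
    ring
  have hsplit : (∫ θ in (0:ℝ)..(Real.arcsin b),
        (2 * (Real.sin θ ^ n * Real.cos θ ^ 2) - 2 * s * (Real.sin θ ^ n * Real.cos θ)))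
      = 2 * (∫ θ in (0:ℝ)..(Real.arcsin b), Real.sin θ ^ n * Real.cos θ ^ 2)
        - 2 * s * ∫ θ in (0:ℝ)..(Real.arcsin b), Real.sin θ ^ n * Real.cos θ := by
    rw [intervalIntegral.integral_sub, intervalIntegral.integral_const_mul,
      intervalIntegral.integral_const_mul]
    · exact (Continuous.intervalIntegrable (by fun_prop) _ _).const_mul 2
    · exact (Continuous.intervalIntegrable (by fun_prop) _ _).const_mul (2 * s)
  have hlast : (∫ θ in (0:ℝ)..(Real.arcsin b), Real.sin θ ^ n * Real.cos θ)
      = b ^ (n + 1) / (n + 1) := by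
    have := integral_sin_pow_mul_cos_pow_odd (a := 0) (b := Real.arcsin b) n 0
    simp only [mul_zero, zero_add, pow_one, pow_zero, mul_one] at this
    rw [this, Real.sin_zero, Real.sin_arcsin (by linarith) hb1, integral_pow]
    simp
  rw [show (fun r => r ^ n * max (2 * Real.sqrt (1 - r ^ 2) - 2 * s) 0) = g from rfl] at *
  rw [hIoi, hIcc, hsub, hcongr, hsplit, hlast]
  ring

private lemma volA' (n : ℕ) (s : ℝ) (hs0 : 0 ≤ s) :
    volume (Metric.closedBall (0 : EuclideanSpace ℝ (Fin (n + 2))) 1 ∩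
        Metric.closedBall ((2 * s) • (EuclideanSpace.single (Fin.last (n + 1)) (1:ℝ))) 1)
      = ∫⁻ z : EuclideanSpace ℝ (Fin (n + 1)),
          ENNReal.ofReal (2 * Real.sqrt (1 - ‖z‖ ^ 2) - 2 * s) := by
  set c : EuclideanSpace ℝ (Fin (n + 2)) :=
    (2 * s) • (EuclideanSpace.single (Fin.last (n + 1)) (1:ℝ)) with hc
  set S := Metric.closedBall (0 : EuclideanSpace ℝ (Fin (n + 2))) 1 ∩ Metric.closedBall c 1
    with hS
  have hSm : MeasurableSet S := measurableSet_closedBall.inter measurableSet_closedBall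
  set κ := ((MeasurableEquiv.piFinSuccAbove (fun _ : Fin (n + 2) => ℝ)
      (Fin.last (n + 1))).symm.trans (MeasurableEquiv.toLp 2 (Fin (n + 2) → ℝ))) with hκ
  have hκp : MeasurePreserving κ volume volume :=
    ((EuclideanSpace.volume_preserving_symm_measurableEquiv_toLp (Fin (n + 2))).symm).comp
      ((volume_preserving_piFinSuccAbove (fun _ : Fin (n + 2) => ℝ) (Fin.last (n + 1))).symm)
  have h1 : volume S = volume (κ ⁻¹' S) := (hκp.measure_preimage hSm.nullMeasurableSet).symm
  have happ : ∀ (t : ℝ) (y : Fin (n + 1) → ℝ) (i : Fin (n + 2)),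
      (κ (t, y)) i = Fin.insertNth (α := fun _ : Fin (n + 2) => ℝ)
        (Fin.last (n + 1)) t y i := by
    intro t y i
    rw [hκ]
    rw [MeasurableEquiv.trans_apply]
    rw [MeasurableEquiv.toLp_apply, PiLp.toLp_apply]
    rw [MeasurableEquiv.piFinSuccAbove_symm_apply]
    simp [Fin.insertNthEquiv]
  have hclast : c (Fin.last (n + 1)) = 2 * s := by
    simp [hc, EuclideanSpace.single_apply]
  have hcother : ∀ j : Fin (n + 1), c ((Fin.last (n + 1)).succAbove j) = 0 := by
    intro j
    rw [hc]
    simp only [PiLp.smul_apply, EuclideanSpace.single_apply, smul_eq_mul]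
    rw [if_neg (Fin.succAbove_ne (Fin.last (n + 1)) j)]
    ring
  have hpre : κ ⁻¹' S = {p : ℝ × (Fin (n + 1) → ℝ) |
      (p.1 ^ 2 + ∑ j, p.2 j ^ 2 ≤ 1) ∧ ((p.1 - 2 * s) ^ 2 + ∑ j, p.2 j ^ 2 ≤ 1)} := by
    ext ⟨t, y⟩
    simp only [hS, Set.mem_preimage, Set.mem_inter_iff, Metric.mem_closedBall,
      Set.mem_setOf_eq]
    rw [EuclideanSpace.dist_eq, EuclideanSpace.dist_eq, Real.sqrt_le_one, Real.sqrt_le_one]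
    simp only [Real.dist_eq, sq_abs]
    rw [Fin.sum_univ_succAbove (fun i => ((κ (t, y)) i - (0 : EuclideanSpace ℝ (Fin (n+2))) i) ^ 2)
      (Fin.last (n + 1))]
    rw [Fin.sum_univ_succAbove (fun i => ((κ (t, y)) i - c i) ^ 2) (Fin.last (n + 1))]
    simp only [happ, hclast, hcother, Fin.insertNth_apply_same, Fin.insertNth_apply_succAbove]
    simp only [show ∀ i, (0 : EuclideanSpace ℝ (Fin (n+2))) i = 0 from fun _ => rfl, sub_zero]
  rw [h1, hpre]
  have hmeas : MeasurableSet {p : ℝ × (Fin (n + 1) → ℝ) |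
      (p.1 ^ 2 + ∑ j, p.2 j ^ 2 ≤ 1) ∧ ((p.1 - 2 * s) ^ 2 + ∑ j, p.2 j ^ 2 ≤ 1)} := by
    have m0 : Measurable fun p : ℝ × (Fin (n + 1) → ℝ) => ∑ j, p.2 j ^ 2 :=
      Finset.measurable_sum _ fun j _ => ((measurable_pi_apply j).comp measurable_snd).pow_const 2
    apply MeasurableSet.inter
    · exact measurableSet_le (((measurable_fst.pow_const 2).add m0)) measurable_const
    · exact measurableSet_le ((((measurable_fst.sub measurable_const).pow_const 2).add m0))
        measurable_const
  rw [MeasureTheory.Measure.volume_eq_prod, MeasureTheory.Measure.prod_apply_symm hmeas]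
  have hslice : ∀ y : Fin (n + 1) → ℝ,
      volume ((fun t => (t, y)) ⁻¹' {p : ℝ × (Fin (n + 1) → ℝ) |
        (p.1 ^ 2 + ∑ j, p.2 j ^ 2 ≤ 1) ∧ ((p.1 - 2 * s) ^ 2 + ∑ j, p.2 j ^ 2 ≤ 1)})
      = ENNReal.ofReal (2 * Real.sqrt (1 - ∑ j, y j ^ 2) - 2 * s) := by
    intro y
    have : ((fun t => (t, y)) ⁻¹' {p : ℝ × (Fin (n + 1) → ℝ) |
        (p.1 ^ 2 + ∑ j, p.2 j ^ 2 ≤ 1) ∧ ((p.1 - 2 * s) ^ 2 + ∑ j, p.2 j ^ 2 ≤ 1)})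
        = {t : ℝ | t ^ 2 + (∑ j, y j ^ 2) ≤ 1 ∧ (t - 2 * s) ^ 2 + (∑ j, y j ^ 2) ≤ 1} := by
      ext t; simp
    rw [this, slice_vol' s _ hs0]
  rw [lintegral_congr hslice]
  have hE : MeasurePreserving (MeasurableEquiv.toLp 2 (Fin (n + 1) → ℝ)).symm volume volume :=
    EuclideanSpace.volume_preserving_symm_measurableEquiv_toLp (Fin (n + 1))
  have hfm : Measurable (fun y : Fin (n + 1) → ℝ =>
      ENNReal.ofReal (2 * Real.sqrt (1 - ∑ j, y j ^ 2) - 2 * s)) := by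
    apply Measurable.ennreal_ofReal
    have m0 : Measurable fun y : Fin (n + 1) → ℝ => ∑ j, y j ^ 2 :=
      Finset.measurable_sum _ fun j _ => (measurable_pi_apply j).pow_const 2
    exact ((measurable_const.sub m0).sqrt.const_mul 2).sub measurable_const
  rw [← hE.lintegral_comp hfm]
  apply lintegral_congr
  intro z
  congr 2
  have : ∑ j, ((MeasurableEquiv.toLp 2 (Fin (n + 1) → ℝ)).symm z) j ^ 2 = ∑ j, z j ^ 2 := by
    rfl
  have hnz : ‖z‖ ^ 2 = ∑ j, z j ^ 2 := by
    rw [EuclideanSpace.norm_eq, Real.sq_sqrt (Finset.sum_nonneg fun j _ => sq_nonneg _)]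
    simp [Real.norm_eq_abs, sq_abs]
  rw [this, hnz]

private lemma wVol_eq' (k : ℕ) :
    Real.sqrt π ^ k / Real.Gamma ((k : ℝ) / 2 + 1) = wVol k := by
  rw [wVol]
  congr 1
  · rw [Real.sqrt_eq_rpow, ← Real.rpow_natCast (π ^ ((1:ℝ)/2)) k,
      ← Real.rpow_mul Real.pi_nonneg]
    congr 1
    ring
  · rw [add_comm]

private lemma wVol_pos' (k : ℕ) : 0 < wVol k := by
  rw [wVol]
  apply div_pos (Real.rpow_pos_of_pos Real.pi_pos _)
  apply Real.Gamma_pos_of_pos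
  positivity

private lemma closedBall_toReal' (k : ℕ) (hk : 0 < k) :
    (volume (Metric.closedBall (0 : EuclideanSpace ℝ (Fin k)) 1)).toReal = wVol k := by
  haveI : Nonempty (Fin k) := ⟨⟨0, hk⟩⟩
  rw [EuclideanSpace.volume_closedBall]
  simp only [Fintype.card_fin, ENNReal.ofReal_one, one_pow, one_mul]
  rw [ENNReal.toReal_ofReal]
  · exact wVol_eq' k
  · rw [wVol_eq' k]
    exact (wVol_pos' k).le

private lemma aux_main' (d : ℕ) (hd : 2 ≤ d) (s : ℝ) (hs0 : 0 ≤ s) (hs1 : s ≤ 1) :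
    (volume (unitBall d ∩ Metric.closedBall ((2 * s) • eLast d) 1)).toReal =
      2 * aSurf (d - 1) * thetaFn d (Real.sqrt (1 - s ^ 2)) -
        2 * s * wVol (d - 1) * (1 - s ^ 2) ^ (((d : ℝ) - 1) / 2) := by
  obtain ⟨n, rfl⟩ : ∃ n, d = n + 2 := ⟨d - 2, by omega⟩
  have hs2 : 0 ≤ 1 - s ^ 2 := by nlinarith
  have heL : eLast (n + 2) = EuclideanSpace.single (Fin.last (n + 1)) (1:ℝ) := by
    rw [eLast, dif_pos (by omega)]
    exact congrArg (fun i => EuclideanSpace.single i (1:ℝ)) (Fin.ext (by simp))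
  rw [unitBall, heL, volA' n s hs0]
  set G : ℝ → ℝ := fun r => max (2 * Real.sqrt (1 - r ^ 2) - 2 * s) 0 with hGdef
  have hof : ∀ x : ℝ, ENNReal.ofReal x = ENNReal.ofReal (max x 0) := by
    intro x
    rcases le_total x 0 with h | h
    · rw [ENNReal.ofReal_of_nonpos h, max_eq_right h, ENNReal.ofReal_zero]
    · rw [max_eq_left h]
  have step1 : (∫⁻ z : EuclideanSpace ℝ (Fin (n + 1)),
        ENNReal.ofReal (2 * Real.sqrt (1 - ‖z‖ ^ 2) - 2 * s))
      = ∫⁻ z : EuclideanSpace ℝ (Fin (n + 1)), ENNReal.ofReal (G ‖z‖) := by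
    exact lintegral_congr fun z => hof _
  have hGcont : Continuous G :=
    (((continuous_const.mul (Real.continuous_sqrt.comp
      (continuous_const.sub (continuous_pow 2)))).sub continuous_const)).max continuous_const
  have step2 : (∫ z : EuclideanSpace ℝ (Fin (n + 1)), G ‖z‖)
      = (∫⁻ z : EuclideanSpace ℝ (Fin (n + 1)), ENNReal.ofReal (G ‖z‖)).toReal := by
    rw [MeasureTheory.integral_eq_lintegral_of_nonneg_ae]
    · exact Filter.Eventually.of_forall fun z => le_max_right _ _
    · exact (hGcont.comp continuous_norm).aestronglyMeasurable
  have step3 := MeasureTheory.integral_fun_norm_addHaar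
    (volume : Measure (EuclideanSpace ℝ (Fin (n + 1)))) G
  rw [finrank_euclideanSpace_fin] at step3
  have hballvol : (volume (Metric.ball (0 : EuclideanSpace ℝ (Fin (n + 1))) 1)).toReal
      = wVol (n + 1) := by
    rw [← MeasureTheory.Measure.addHaar_closedBall_eq_addHaar_ball]
    exact closedBall_toReal' (n + 1) (by omega)
  rw [step1, ← step2, step3, measureReal_def, hballvol]
  simp only [Nat.add_sub_cancel, smul_eq_mul, nsmul_eq_mul]
  have hint : (∫ y in Ioi (0:ℝ), y ^ n * G y)
      = 2 * (∫ θ in (0:ℝ)..(Real.arcsin (Real.sqrt (1 - s ^ 2))),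
            Real.sin θ ^ n * Real.cos θ ^ 2)
        - 2 * s * (Real.sqrt (1 - s ^ 2)) ^ (n + 1) / (n + 1) := by
    simp only [hGdef]
    exact oneD' n s hs0 hs1
  rw [hint]
  have hθ : thetaFn (n + 2) (Real.sqrt (1 - s ^ 2))
      = ∫ θ in (0:ℝ)..(Real.arcsin (Real.sqrt (1 - s ^ 2))),
          Real.sin θ ^ n * Real.cos θ ^ 2 := by
    rw [thetaFn]
    norm_num
  have haS : aSurf (n + 2 - 1) = ((n:ℝ) + 1) * wVol (n + 1) := by
    rw [show n + 2 - 1 = n + 1 from rfl, aSurf]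
    push_cast
    ring
  have hwv : wVol (n + 2 - 1) = wVol (n + 1) := rfl
  have hbpow : (Real.sqrt (1 - s ^ 2)) ^ (n + 1)
      = (1 - s ^ 2) ^ ((((n + 2 : ℕ) : ℝ) - 1) / 2) := by
    rw [Real.sqrt_eq_rpow, ← Real.rpow_natCast ((1 - s ^ 2) ^ ((1:ℝ)/2)) (n + 1),
      ← Real.rpow_mul hs2]
    congr 1
    push_cast
    ring
  rw [hθ, haS, hwv]
  rw [← hbpow]
  have hne : ((n:ℝ) + 1) ≠ 0 := by positivity
  field_simp
  push_cast
  ring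

end AuxVolInter

/-- volume of the intersection of two unit balls at distance `2s`, together with
the value `Θ(1) = w_d / (2 A_{d−1})`. -/
theorem volume_inter_unitBalls (d : ℕ) (hd : 2 ≤ d) (s : ℝ) (hs0 : 0 ≤ s) (hs1 : s ≤ 1) :
    (volume (unitBall d ∩ Metric.closedBall ((2 * s) • eLast d) 1)).toReal =
      2 * aSurf (d - 1) * thetaFn d (Real.sqrt (1 - s ^ 2)) -
        2 * s * wVol (d - 1) * (1 - s ^ 2) ^ (((d : ℝ) - 1) / 2) ∧
    thetaFn d 1 = wVol d / (2 * aSurf (d - 1)) := by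
  refine ⟨aux_main' d hd s hs0 hs1, ?_⟩
  have h0 := aux_main' d hd 0 le_rfl zero_le_one
  rw [show ((2 * (0:ℝ)) • eLast d) = (0 : EuclideanSpace ℝ (Fin d)) by
    rw [mul_zero, zero_smul]] at h0
  rw [show Metric.closedBall (0 : EuclideanSpace ℝ (Fin d)) 1 = unitBall d from rfl,
    Set.inter_self] at h0
  have hvol : (volume (unitBall d)).toReal = wVol d := by
    rw [unitBall]
    exact closedBall_toReal' d (by omega)
  rw [hvol] at h0
  norm_num [Real.sqrt_one] at h0
  have haS : (0:ℝ) < aSurf (d - 1) := by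
    rw [aSurf]
    apply mul_pos _ (wVol_pos' (d - 1))
    have h1 : 0 < d - 1 := by omega
    exact_mod_cast Nat.cast_pos.mpr h1
  rw [eq_div_iff (by positivity)]
  linarith
end
end
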